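/- Let M be a finitely generated abelian group and let ψ : M → M be an injective group endomorphism. Suppose there exists a monic polynomial P ∈ ℤ[X] with P(ψ) = 0 as an endomorphism of M, such that no complex root of P is an algebraic unit (i.e. for every z ∈ ℂ with P(z) = 0, it is not the case that both z and z⁻¹ are integral over ℤ). Then the subgroup ⋂_{j≥0} ψ^j(M) is finite. -/

import Mathlib

open Polynomial TensorProduct

section Aux

variable {M : Type*} [AddCommGroup M]

/-- Key finiteness lemma: a f.g. ℤ-module with an automorphism satisfying a monic
integer polynomial with no algebraic-unit root is finite. -/
theorem aux_finite [Module ℤ M] [Module.Finite ℤ M] (e : M ≃ₗ[ℤ] M)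
    (P : Polynomial ℤ) (hmonic : P.Monic)
    (hP : Polynomial.aeval (e : M →ₗ[ℤ] M) P = 0)
    (hroots : ∀ z : ℂ, Polynomial.aeval z P = 0 →
      ¬(z ≠ 0 ∧ IsIntegral ℤ z ∧ IsIntegral ℤ z⁻¹)) : Finite M := by
  classical
  set α : Module.End ℤ M := (e : M →ₗ[ℤ] M) with hα
  set β : Module.End ℤ M := (e.symm : M →ₗ[ℤ] M) with hβ
  have hαβ : α * β = 1 := by
    ext x; simp [hα, hβ, Module.End.mul_apply]
  have hβα : β * α = 1 := by
    ext x; simp [hα, hβ, Module.End.mul_apply]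
  -- base change to ℂ
  let Φ : Module.End ℤ M →ₐ[ℤ] Module.End ℂ (ℂ ⊗[ℤ] M) :=
    { Module.End.baseChangeHom ℤ ℂ M with commutes' := fun r => by simp }
  set αV : Module.End ℂ (ℂ ⊗[ℤ] M) := Φ α with hαV
  set βV : Module.End ℂ (ℂ ⊗[ℤ] M) := Φ β with hβV
  have hαβV : αV * βV = 1 := by rw [hαV, hβV, ← map_mul, hαβ, map_one]
  have hβαV : βV * αV = 1 := by rw [hαV, hβV, ← map_mul, hβα, map_one]
  have hPαV : Polynomial.aeval αV P = 0 := by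
    rw [hαV, Polynomial.aeval_algHom_apply, hP, map_zero]
  obtain ⟨Q, hQmonic, hQβ⟩ := LinearMap.exists_monic_and_aeval_eq_zero ℤ β
  have hQβ' : Polynomial.aeval β Q = 0 := by
    ext x
    have := LinearMap.congr_fun hQβ x
    simp [Polynomial.aeval_eq_sum_range, LinearMap.sum_apply, Module.End.intCast_apply] at this ⊢
    refine (Finset.sum_congr rfl fun i _ => ?_).trans this
    exact (int_smul_eq_zsmul _ _ _).symm
  have hQβV : Polynomial.aeval βV Q = 0 := by
    rw [hβV, Polynomial.aeval_algHom_apply, hQβ', map_zero]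
  -- the base-changed vector space is trivial
  have hsub : Subsingleton (ℂ ⊗[ℤ] M) := by
    by_contra hns
    rw [not_subsingleton_iff_nontrivial] at hns
    obtain ⟨z, hz⟩ := Module.End.exists_eigenvalue αV
    obtain ⟨v, hv⟩ := hz.exists_hasEigenvector
    have hv0 : v ≠ 0 := hv.2
    have hαv : αV v = z • v := hv.apply_eq_smul
    have hinjα : Function.Injective αV := by
      intro x y hxy
      have : βV (αV x) = βV (αV y) := by rw [hxy]
      simpa [← Module.End.mul_apply, hβαV] using this
    have hz0 : z ≠ 0 := by
      intro h
      apply hv0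
      apply hinjα
      simp [hαv, h]
    have hβv : βV v = z⁻¹ • v := by
      have h1 : βV (αV v) = v := by
        rw [← Module.End.mul_apply, hβαV]; rfl
      rw [hαv, map_smul] at h1
      have h2 := congrArg (fun w => z⁻¹ • w) h1
      simpa [smul_smul, inv_mul_cancel₀ hz0] using h2
    have hPz : Polynomial.aeval z P = 0 := by
      have h1 := Module.End.aeval_apply_of_hasEigenvector
        (p := P.map (algebraMap ℤ ℂ)) hv
      rw [Polynomial.aeval_map_algebraMap, hPαV] at h1
      have h2 : (P.map (algebraMap ℤ ℂ)).eval z = 0 := by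
        have := h1.symm
        simp only [LinearMap.zero_apply] at this
        rcases smul_eq_zero.mp this with h | h
        · exact h
        · exact absurd h hv0
      rwa [Polynomial.eval_map, ← Polynomial.aeval_def] at h2
    have hv' : βV.HasEigenvector z⁻¹ v :=
      ⟨Module.End.mem_eigenspace_iff.mpr hβv, hv0⟩
    have hQz : Polynomial.aeval (z⁻¹) Q = 0 := by
      have h1 := Module.End.aeval_apply_of_hasEigenvector
        (p := Q.map (algebraMap ℤ ℂ)) hv'
      rw [Polynomial.aeval_map_algebraMap, hQβV] at h1
      have h2 : (Q.map (algebraMap ℤ ℂ)).eval z⁻¹ = 0 := by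
        have := h1.symm
        simp only [LinearMap.zero_apply] at this
        rcases smul_eq_zero.mp this with h | h
        · exact h
        · exact absurd h hv0
      rwa [Polynomial.eval_map, ← Polynomial.aeval_def] at h2
    exact hroots z hPz ⟨hz0, ⟨P, hmonic, by rwa [← Polynomial.aeval_def]⟩,
      ⟨Q, hQmonic, by rwa [← Polynomial.aeval_def]⟩⟩
  -- flatness of ℂ over ℤ
  have hflatQ : Module.Flat ℤ ℚ := IsLocalization.flat ℚ (nonZeroDivisors ℤ)
  have hflat : Module.Flat ℤ ℂ := Module.Flat.trans ℤ ℚ ℂ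
  -- torsion
  have htor : Module.IsTorsion ℤ M := by
    intro x
    by_contra hx
    push_neg at hx
    have hf : Function.Injective (LinearMap.toSpanSingleton ℤ M x) := by
      rw [← LinearMap.ker_eq_bot, LinearMap.ker_eq_bot']
      intro a ha
      simp only [LinearMap.toSpanSingleton_apply] at ha
      by_contra ha0
      exact hx ⟨a, mem_nonZeroDivisors_of_ne_zero ha0⟩ ha
    have hinj : Function.Injective
        ((LinearMap.toSpanSingleton ℤ M x).lTensor ℂ) :=
      Module.Flat.lTensor_preserves_injective_linearMap _ hf
    have : Subsingleton (ℂ ⊗[ℤ] ℤ) := hinj.subsingleton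
    have : Nontrivial (ℂ ⊗[ℤ] ℤ) := (TensorProduct.rid ℤ ℂ).toEquiv.nontrivial
    exact absurd ‹Subsingleton (ℂ ⊗[ℤ] ℤ)› (not_subsingleton_iff_nontrivial.mpr this)
  exact Module.finite_of_fg_torsion M htor

end Aux

theorem finite_iInter_iterate_of_no_unit_root {M : Type*} [AddCommGroup M]
    [AddGroup.FG M] (ψ : AddMonoid.End M) (hψ : Function.Injective ψ)
    (P : Polynomial ℤ) (hmonic : P.Monic)
    (hPψ : Polynomial.aeval ψ P = 0)
    (hroots : ∀ z : ℂ, Polynomial.aeval z P = 0 →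
      ¬(z ≠ 0 ∧ IsIntegral ℤ z ∧ IsIntegral ℤ z⁻¹)) :
    (⋂ j : ℕ, Set.range ((⇑ψ)^[j])).Finite := by
  classical
  haveI : Module.Finite ℤ M := Module.Finite.iff_addGroup_fg.mpr ‹_›
  haveI : IsNoetherian ℤ M := inferInstance
  set ψₗ : M →ₗ[ℤ] M := ψ.toIntLinearMap with hψₗdef
  have hψc : ∀ x : M, ψₗ x = ψ x := fun _ => rfl
  set N : Submodule ℤ M := ⨅ j : ℕ, LinearMap.range (ψₗ ^ j) with hNdef
  have hmem : ∀ x : M, x ∈ N ↔ ∀ j : ℕ, x ∈ LinearMap.range (ψₗ ^ j) := by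
    intro x; rw [hNdef]; exact Submodule.mem_iInf _
  have hset : (⋂ j : ℕ, Set.range ((⇑ψ)^[j])) = ↑N := by
    rw [hNdef, Submodule.coe_iInf]
    apply Set.iInter_congr
    intro j
    rw [LinearMap.coe_range, Module.End.coe_pow]
    rfl
  rw [hset]
  haveI : Module.Finite ℤ ↥N := Module.Finite.iff_fg.mpr (IsNoetherian.noetherian N)
  -- ψ maps N into N
  have hmaps : ∀ x ∈ N, ψₗ x ∈ N := by
    intro x hx
    rw [hmem] at hx ⊢
    intro j
    obtain ⟨y, hy⟩ := hx j
    exact ⟨ψₗ y, by rw [← hy, ← Module.End.mul_apply, ← Module.End.mul_apply,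
      ← pow_succ, ← pow_succ']⟩
  set α : ↥N →ₗ[ℤ] ↥N := ψₗ.restrict hmaps with hαdef
  have hαc : ∀ x : ↥N, (α x : M) = ψ (x : M) := fun _ => rfl
  have hinj : Function.Injective α := by
    intro x y hxy
    apply Subtype.ext
    apply hψ
    rw [← hαc, ← hαc, hxy]
  have hsurj : Function.Surjective α := by
    rintro ⟨x, hx⟩
    have hx' := (hmem x).mp hx
    obtain ⟨y, hy⟩ := hx' 1
    rw [pow_one] at hy
    have hyN : y ∈ N := by
      rw [hmem]
      intro j
      obtain ⟨w, hw⟩ := hx' (j + 1)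
      rw [pow_succ', Module.End.mul_apply] at hw
      have : ψₗ ((ψₗ ^ j) w) = ψₗ y := by rw [hw, hy]
      exact ⟨w, hψ this⟩
    exact ⟨⟨y, hyN⟩, Subtype.ext hy⟩
  set e : ↥N ≃ₗ[ℤ] ↥N := LinearEquiv.ofBijective α ⟨hinj, hsurj⟩ with hedef
  have heα : (e : ↥N →ₗ[ℤ] ↥N) = α := rfl
  -- P(α) = 0
  have hpowc : ∀ (n : ℕ) (x : ↥N), ((α ^ n) x : M) = ((ψ ^ n : AddMonoid.End M)) (x : M) := by
    intro n
    induction n with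
    | zero => intro x; simp
    | succ n ih =>
      intro x
      rw [pow_succ, Module.End.mul_apply, ih, hαc, pow_succ]
      rfl
  have hPα : Polynomial.aeval α P = 0 := by
    apply LinearMap.ext
    intro x
    apply Subtype.ext
    rw [Polynomial.aeval_eq_sum_range (R := ℤ)]
    have hz : ((0 : ↥N) : M) = 0 := rfl
    rw [LinearMap.zero_apply, hz]
    rw [LinearMap.sum_apply]
    rw [AddSubmonoidClass.coe_finset_sum]
    have : ∀ i ∈ Finset.range (P.natDegree + 1),
        ((P.coeff i • α ^ i) x : M) = P.coeff i • ((ψ ^ i : AddMonoid.End M) (x : M)) := by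
      intro i _
      rw [LinearMap.smul_apply, Submodule.coe_smul, hpowc]
    rw [Finset.sum_congr rfl this]
    have hψsum : (Polynomial.aeval ψ P) (x : M) =
        ∑ i ∈ Finset.range (P.natDegree + 1), P.coeff i • ((ψ ^ i : AddMonoid.End M) (x : M)) := by
      rw [Polynomial.aeval_eq_sum_range (R := ℤ)]; erw [AddMonoidHom.finset_sum_apply]
      exact Finset.sum_congr rfl fun i _ => rfl
    rw [← hψsum, hPψ]
    rfl
  have hPe : Polynomial.aeval (e : ↥N →ₗ[ℤ] ↥N) P = 0 := by rw [heα]; exact hPα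
  have : Finite ↥N := aux_finite e P hmonic hPe hroots
  exact Set.toFinite _
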